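/- arXiv:2412.16328 — 6 statements merged into one kernel-verified Lean document; each statement's English description precedes it below -/
import Mathlib

section
/- For every natural number n ≥ 1, every k < 4n, and all natural numbers θ and v, the following are equivalent: (1) there exist sequences y₀, y₁, …, y_{4n} and w₀, w₁, …, w_{4n−1} of natural numbers such that w_j ≤ 1 for all j < 4n, y_j = 2·y_{j+1} + w_j for all j < 4n, y₀ = θ, and w_k = v; (2) v = 1 if the k-th least significant bit of the binary expansion of θ is 1, and v = 0 otherwise (i.e., v = if Nat.testBit θ k then 1 else 0). -/
/-- Correctness of the Presburger formula `Ψ_{k,v}(θ)`: there exist quotients `y j`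
and bits `w j` with `y j = 2 * y (j+1) + w j`, `y 0 = θ`, `w j ∈ {0,1}`, and `w k = v`
iff `v` is the `k`-th least significant bit of `θ`. -/
theorem stmt_0 (n : ℕ) (hn : 1 ≤ n) (k : ℕ) (hk : k < 4 * n) (θ v : ℕ) :
    (∃ y w : ℕ → ℕ,
      (∀ j < 4 * n, w j ≤ 1) ∧
      (∀ j < 4 * n, y j = 2 * y (j + 1) + w j) ∧
      y 0 = θ ∧ w k = v) ↔
    v = (if Nat.testBit θ k then 1 else 0) := by
  constructor
  · rintro ⟨y, w, hw, hrec, h0, hv⟩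
    have key : ∀ j, j ≤ k → y j = θ / 2 ^ j := by
      intro j hj
      induction j with
      | zero => simpa using h0
      | succ i ih =>
        have hi : i ≤ k := Nat.le_of_succ_le hj
        have hlt : i < 4 * n := lt_of_le_of_lt hi hk
        have h1 : y i = 2 * y (i + 1) + w i := hrec i hlt
        have hwle := hw i hlt
        have h2 : y (i + 1) = y i / 2 := by omega
        rw [h2, ih hi, Nat.div_div_eq_div_mul, pow_succ]
    have hyk : y k = θ / 2 ^ k := key k le_rfl
    have h1 : y k = 2 * y (k + 1) + w k := hrec k hk
    have hwkle := hw k hk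
    have hwk : w k = y k % 2 := by omega
    rw [← hv, hwk, hyk]
    rw [Nat.testBit_eq_decide_div_mod_eq]
    rcases Nat.mod_two_eq_zero_or_one (θ / 2 ^ k) with h | h <;> simp [h]
  · rintro rfl
    refine ⟨fun j => θ / 2 ^ j, fun j => θ / 2 ^ j % 2, ?_, ?_, by simp, ?_⟩
    · intro j _; show θ / 2 ^ j % 2 ≤ 1; omega
    · intro j _
      show θ / 2 ^ j = 2 * (θ / 2 ^ (j + 1)) + θ / 2 ^ j % 2
      have : θ / 2 ^ (j + 1) = θ / 2 ^ j / 2 := by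
        rw [Nat.div_div_eq_div_mul, pow_succ]
      rw [this]; omega
    · show θ / 2 ^ k % 2 = _
      rw [Nat.testBit_eq_decide_div_mod_eq]
      rcases Nat.mod_two_eq_zero_or_one (θ / 2 ^ k) with h | h <;> simp [h]
end

section
/- Let n ≥ 1, let 1 ≤ i ≤ n, and set d = 4(n − i). Let θ be a natural number such that Nat.testBit θ j = false for all j < d + 4, and such that every position j with Nat.testBit θ j = true satisfies j % 4 = 2. Then the set of natural numbers θ' with θ ≤ θ' < θ + 2^{d+4} satisfying the exit condition — namely Nat.testBit θ' d = true, Nat.testBit θ' j = false for all j < d, and Nat.testBit θ' j = false for every j with j % 4 = 1 or j % 4 = 3 — is exactly the two-element set {θ + 2^d, θ + 2^d + 2^{d+2}}. -/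
/-- Exit times of the existential-quantifier gadget: if `q_i` is entered at time `θ`
whose bits below `d + 4` are all zero (`d = 4 * (n - i)`) and whose only set bits are
β-bits (positions `≡ 2 (mod 4)`), then the times `θ'` in `[θ, θ + 2^(d+4))` satisfying
the exit condition (`δ_i = 1`, lower bits zero, all α- and γ-bits zero) are exactly
`θ + 2^d` and `θ + 2^d + 2^(d+2)`. -/
theorem stmt_2 (n i : ℕ) (hn : 1 ≤ n) (hi1 : 1 ≤ i) (hi2 : i ≤ n)
    (d : ℕ) (hd : d = 4 * (n - i)) (θ : ℕ)
    (hlow : ∀ j < d + 4, Nat.testBit θ j = false)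
    (hbeta : ∀ j, Nat.testBit θ j = true → j % 4 = 2) :
    {θ' : ℕ | θ ≤ θ' ∧ θ' < θ + 2 ^ (d + 4) ∧
      Nat.testBit θ' d = true ∧
      (∀ j < d, Nat.testBit θ' j = false) ∧
      (∀ j, (j % 4 = 1 ∨ j % 4 = 3) → Nat.testBit θ' j = false)} =
    {θ + 2 ^ d, θ + 2 ^ d + 2 ^ (d + 2)} := by
  have hd4 : d % 4 = 0 := by omega
  -- θ is divisible by 2^(d+4)
  have hθ0 : θ % 2 ^ (d + 4) = 0 := by
    apply Nat.eq_of_testBit_eq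
    intro j
    simp only [Nat.testBit_mod_two_pow, Nat.zero_testBit]
    by_cases h : j < d + 4
    · simp [h, hlow j h]
    · simp [h]
  obtain ⟨m, hm⟩ := Nat.dvd_of_mod_eq_zero hθ0
  -- key bit-splitting lemma
  have key : ∀ r, r < 2 ^ (d + 4) → ∀ j, Nat.testBit (θ + r) j =
      if j < d + 4 then Nat.testBit r j else Nat.testBit θ j := by
    intro r hr j
    rw [hm, Nat.testBit_two_pow_mul_add m hr j]
    split
    · rfl
    · rename_i h
      rw [Nat.testBit_two_pow_mul]
      simp [Nat.le_of_not_lt h]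
  have h5 : 2 ^ d + 2 ^ (d + 2) = 2 ^ d * 5 := by rw [pow_add]; ring
  ext θ'
  simp only [Set.mem_setOf_eq, Set.mem_insert_iff, Set.mem_singleton_iff]
  constructor
  · rintro ⟨h1, h2, h3, h4, hag⟩
    set r := θ' - θ with hrdef
    have hθ' : θ' = θ + r := by omega
    have hrlt : r < 2 ^ (d + 4) := by omega
    -- bits of r below d are zero, hence 2^d ∣ r
    have hrd : r % 2 ^ d = 0 := by
      apply Nat.eq_of_testBit_eq
      intro j
      simp only [Nat.testBit_mod_two_pow, Nat.zero_testBit]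
      by_cases h : j < d
      · have := h4 j h
        rw [hθ', key r hrlt j] at this
        simp only [show j < d + 4 by omega, if_true] at this
        simp [h, this]
      · simp [h]
    obtain ⟨s, hs⟩ := Nat.dvd_of_mod_eq_zero hrd
    have hslt : s < 16 := by
      by_contra hc
      push_neg at hc
      have : 2 ^ d * 16 ≤ r := by
        calc 2 ^ d * 16 ≤ 2 ^ d * s := by
              exact Nat.mul_le_mul_left _ hc
          _ = r := hs.symm
      have h16 : 2 ^ (d + 4) = 2 ^ d * 16 := by rw [pow_add]; ring
      omega
    have hbit : ∀ k, Nat.testBit s k = Nat.testBit r (d + k) := by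
      intro k
      rw [hs, Nat.testBit_two_pow_mul]
      simp [Nat.add_sub_cancel_left]
    have hrbit : ∀ j, j < d + 4 → Nat.testBit r j = Nat.testBit θ' j := by
      intro j hj
      rw [hθ', key r hrlt j]
      simp [hj]
    have hs0 : Nat.testBit s 0 = true := by
      rw [hbit 0, Nat.add_zero, hrbit d (by omega)]
      exact h3
    have hs1 : Nat.testBit s 1 = false := by
      rw [hbit 1, hrbit (d + 1) (by omega)]
      exact hag (d + 1) (by omega)
    have hs3 : Nat.testBit s 3 = false := by
      rw [hbit 3, hrbit (d + 3) (by omega)]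
      exact hag (d + 3) (by omega)
    rw [Nat.testBit_eq_decide_div_mod_eq] at hs0 hs1 hs3
    simp only [pow_zero, pow_one, Nat.div_one, decide_eq_true_eq,
      decide_eq_false_iff_not] at hs0 hs1 hs3
    have hs15 : s = 1 ∨ s = 5 := by omega
    rcases hs15 with h | h
    · left; rw [hθ', hs, h]; ring
    · right; rw [hθ', hs, h, add_assoc, h5]
  · intro h
    have hbθ : ∀ j, ¬ (j % 4 = 2) → Nat.testBit θ j = false := by
      intro j hj
      cases h' : Nat.testBit θ j with
      | false => rfl
      | true => exact absurd (hbeta j h') hj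
    rcases h with h | h
    · subst h
      have hrlt : (2 : ℕ) ^ d < 2 ^ (d + 4) :=
        Nat.pow_lt_pow_right one_lt_two (by omega)
      refine ⟨Nat.le_add_right _ _, by omega, ?_, ?_, ?_⟩
      · rw [key _ hrlt]
        simp [Nat.testBit_two_pow_self]
      · intro j hj
        rw [key _ hrlt]
        simp only [show j < d + 4 by omega, if_true]
        exact Nat.testBit_two_pow_of_ne (by omega)
      · intro j hj
        rw [key _ hrlt]
        by_cases hjd : j < d + 4
        · simp only [hjd, if_true]
          exact Nat.testBit_two_pow_of_ne (by omega)
        · simp only [hjd, if_false]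
          exact hbθ j (by omega)
    · subst h
      rw [add_assoc, h5]
      have hrlt : 2 ^ d * 5 < 2 ^ (d + 4) := by
        have h16 : 2 ^ (d + 4) = 2 ^ d * 16 := by rw [pow_add]; ring
        have : 0 < 2 ^ d := Nat.pow_pos (by norm_num)
        omega
      have hbit5 : ∀ j, Nat.testBit (2 ^ d * 5) j =
          (decide (d ≤ j) && Nat.testBit 5 (j - d)) := fun j =>
        Nat.testBit_two_pow_mul
      refine ⟨Nat.le_add_right _ _, by omega, ?_, ?_, ?_⟩
      · rw [key _ hrlt]
        simp only [show d < d + 4 by omega, if_true, hbit5]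
        simp
      · intro j hj
        rw [key _ hrlt]
        simp only [show j < d + 4 by omega, if_true, hbit5]
        simp [Nat.not_le_of_lt hj]
      · intro j hj
        rw [key _ hrlt]
        by_cases hjd : j < d + 4
        · simp only [hjd, if_true, hbit5]
          by_cases hdj : d ≤ j
          · have : j - d = 1 ∨ j - d = 3 := by omega
            rcases this with h' | h' <;> simp [hdj, h'] <;> decide
          · simp [hdj]
        · simp only [hjd, if_false]
          exact hbθ j (by omega)
end

section
/- Let V be a finite vertex set and E : V → V → ℕ → Prop an availability relation such that there exist b ∈ ℕ and p > 0 with: for all u, v ∈ V and all θ ≥ b, E u v θ holds if and only if E u v (θ + p) holds. Define the step relation R on V × ℕ by R (u, θ) (v, θ') iff θ' = θ + 1 and E u v θ, and define the step relation R' on V × {0, …, b + p − 1} by R' (u, i) (v, j) iff E u v i and (either j = i + 1 with i + 1 ≤ b + p − 1, or i = b + p − 1 and j = b). Then for all s, t ∈ V: there exists θ ∈ ℕ such that (t, θ) is reachable from (s, 0) under the reflexive–transitive closure of R, if and only if there exists m with 0 ≤ m ≤ b + p − 1 such that (t, m) is reachable from (s, 0) under the reflexive–transitive closure of R'. -/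
private def piT (b p θ : ℕ) : ℕ := if θ ≤ b + p - 1 then θ else b + (θ - b) % p

private lemma piT_succ_mod (n p : ℕ) (hp : 0 < p) :
    (n + 1) % p = if n % p + 1 = p then 0 else n % p + 1 := by
  rcases eq_or_lt_of_le (show 1 ≤ p from hp) with h | h
  · have hp1 : p = 1 := by omega
    subst hp1; simp [Nat.mod_one]
  · rw [Nat.add_mod, Nat.mod_eq_of_lt h]
    have hr : n % p < p := Nat.mod_lt _ hp
    split
    · rename_i h2; rw [h2, Nat.mod_self]
    · rename_i h2; exact Nat.mod_eq_of_lt (by omega)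

private lemma piT_le (b p θ : ℕ) (hp : 0 < p) : piT b p θ ≤ b + p - 1 := by
  have hr : (θ - b) % p < p := Nat.mod_lt _ hp
  unfold piT
  split <;> omega

private lemma piT_spec (b p θ : ℕ) (hp : 0 < p) :
    ∃ k, θ = piT b p θ + k * p ∧ (θ ≠ piT b p θ → b ≤ piT b p θ) := by
  unfold piT
  split
  · exact ⟨0, by simp, fun h => (h rfl).elim⟩
  · rename_i h
    have hb : b ≤ θ := by omega
    refine ⟨(θ - b) / p, ?_, fun _ => Nat.le_add_right _ _⟩
    have := Nat.mod_add_div' (θ - b) p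
    omega

private lemma piT_succ (b p θ : ℕ) (hp : 0 < p) :
    (piT b p θ = b + p - 1 ∧ piT b p (θ + 1) = b) ∨
    (piT b p θ + 1 ≤ b + p - 1 ∧ piT b p (θ + 1) = piT b p θ + 1) := by
  by_cases h1 : θ + 1 ≤ b + p - 1
  · right
    rw [piT, if_pos (by omega : θ ≤ b + p - 1), piT, if_pos h1]
    omega
  · by_cases h2 : θ ≤ b + p - 1
    · left
      have hθ : θ = b + p - 1 := by omega
      rw [piT, if_pos h2, piT, if_neg h1, hθ]
      have h3 : b + p - 1 + 1 - b = p := by omega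
      rw [h3, Nat.mod_self]
      exact ⟨rfl, by omega⟩
    · have hb : b ≤ θ := by omega
      have hr : (θ - b) % p < p := Nat.mod_lt _ hp
      have hs := piT_succ_mod (θ - b) p hp
      have he : θ + 1 - b = θ - b + 1 := by omega
      rw [piT, if_neg h2, piT, if_neg h1, he, hs]
      by_cases h3 : (θ - b) % p + 1 = p
      · left; rw [if_pos h3]; omega
      · right; rw [if_neg h3]; omega

/-- Correctness of the product construction for reachability on ultimately periodic
temporal graphs: reachability from `(s, 0)` under the time-incrementing step relation
`R` coincides with reachability from `(s, 0)` in the finite product graph on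
`V × {0, …, b + p − 1}` with the wrap-around step relation `R'`. -/
theorem stmt_8 {V : Type*} [Fintype V] (E : V → V → ℕ → Prop)
    (b p : ℕ) (hp : 0 < p)
    (hper : ∀ u v θ, b ≤ θ → (E u v θ ↔ E u v (θ + p)))
    (R R' : V × ℕ → V × ℕ → Prop)
    (hR : ∀ x y, R x y ↔ y.2 = x.2 + 1 ∧ E x.1 y.1 x.2)
    (hR' : ∀ x y, R' x y ↔ E x.1 y.1 x.2 ∧
      ((y.2 = x.2 + 1 ∧ x.2 + 1 ≤ b + p - 1) ∨ (x.2 = b + p - 1 ∧ y.2 = b)))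
    (s t : V) :
    (∃ θ : ℕ, Relation.ReflTransGen R (s, 0) (t, θ)) ↔
    (∃ m : ℕ, m ≤ b + p - 1 ∧ Relation.ReflTransGen R' (s, 0) (t, m)) := by
  have hmul : ∀ u v θ k, b ≤ θ → (E u v θ ↔ E u v (θ + k * p)) := by
    intro u v θ k hb
    induction k with
    | zero => simp
    | succ k ih =>
      have h : θ + (k + 1) * p = (θ + k * p) + p := by ring
      rw [h]
      exact ih.trans (hper u v (θ + k * p) (by omega))
  have htrans : ∀ u v θ, E u v θ ↔ E u v (piT b p θ) := by
    intro u v θ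
    obtain ⟨k, hk, hbk⟩ := piT_spec b p θ hp
    by_cases h : θ = piT b p θ
    · rw [← h]
    · have h2 := hmul u v (piT b p θ) k (hbk h)
      rw [← hk] at h2
      exact h2.symm
  have hpi0 : piT b p 0 = 0 := by unfold piT; rw [if_pos (by omega)]
  constructor
  · rintro ⟨θ, hreach⟩
    refine ⟨piT b p θ, piT_le b p θ hp, ?_⟩
    have key : ∀ (x : V × ℕ), Relation.ReflTransGen R (s, 0) x →
        Relation.ReflTransGen R' (s, 0) (x.1, piT b p x.2) := by
      intro x hx
      induction hx with
      | refl => rw [hpi0]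
      | @tail x' y' hab hbc ih =>
        obtain ⟨hy2, hE⟩ := (hR x' y').mp hbc
        refine ih.tail ?_
        rw [hR']
        refine ⟨(htrans _ _ _).mp hE, ?_⟩
        rcases piT_succ b p x'.2 hp with ⟨h1, h2⟩ | ⟨h1, h2⟩
        · right; rw [hy2]; exact ⟨h1, h2⟩
        · left; rw [hy2]; exact ⟨h2, h1⟩
    exact key (t, θ) hreach
  · rintro ⟨m, _, hreach⟩
    have key : ∀ (x : V × ℕ), Relation.ReflTransGen R' (s, 0) x →
        ∃ θ, piT b p θ = x.2 ∧ Relation.ReflTransGen R (s, 0) (x.1, θ) := by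
      intro x hx
      induction hx with
      | refl => exact ⟨0, hpi0, .refl⟩
      | @tail x' y' hab hbc ih =>
        obtain ⟨θ, hθ, hr⟩ := ih
        obtain ⟨hE, hcase⟩ := (hR' x' y').mp hbc
        have hEθ : E x'.1 y'.1 θ := by rw [htrans, hθ]; exact hE
        refine ⟨θ + 1, ?_, hr.tail ((hR _ _).mpr ⟨rfl, hEθ⟩)⟩
        rcases piT_succ b p θ hp with ⟨h1, h2⟩ | ⟨h1, h2⟩ <;> omega
    obtain ⟨θ, _, hr⟩ := key (t, m) hreach
    exact ⟨θ, hr⟩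
end

section
/- Let V be a vertex set and E : V → V → ℕ → Prop an availability relation. If there exists a temporal walk with waiting from s to t, i.e., vertices v₀ = s, v₁, …, v_m = t and strictly increasing times θ₁ < θ₂ < ⋯ < θ_m with E v_{j−1} v_j θ_j for all 1 ≤ j ≤ m, then there exists a temporal walk with waiting from s to t in which all vertices v'₀, …, v'_{m'} are pairwise distinct, whose length m' satisfies m' ≤ m, and whose arrival time θ'_{m'} satisfies θ'_{m'} ≤ θ_m. In particular, if V is finite, any vertex that is reachable by a temporal walk with waiting is reachable by one of length strictly less than the cardinality of V. -/
theorem stmt9_aux {V : Type*} (E : V → V → ℕ → Prop) (s t : V) :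
    ∀ (m : ℕ) (v : ℕ → V) (θ : ℕ → ℕ),
    v 0 = s → v m = t →
    (∀ j, 1 ≤ j → j < m → θ j < θ (j + 1)) →
    (∀ j, 1 ≤ j → j ≤ m → E (v (j - 1)) (v j) (θ j)) →
    ∃ (m' : ℕ) (v' : ℕ → V) (θ' : ℕ → ℕ),
      m' ≤ m ∧ v' 0 = s ∧ v' m' = t ∧
      (∀ i ≤ m', ∀ j ≤ m', i ≠ j → v' i ≠ v' j) ∧
      (∀ j, 1 ≤ j → j < m' → θ' j < θ' (j + 1)) ∧
      (∀ j, 1 ≤ j → j ≤ m' → E (v' (j - 1)) (v' j) (θ' j)) ∧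
      (1 ≤ m' → θ' m' ≤ θ m) ∧
      (∀ (inst : Fintype V), m' < @Fintype.card V inst) := by
  intro m
  induction m using Nat.strong_induction_on with
  | _ m ih =>
  intro v θ hs ht hmono hedge
  -- monotonicity chain
  have chain : ∀ b, b ≤ m → ∀ a, 1 ≤ a → a ≤ b → θ a ≤ θ b := by
    intro b
    induction b with
    | zero => intro _ a ha hab; omega
    | succ n ihn =>
      intro hb a ha hab
      rcases eq_or_lt_of_le hab with h | h
      · rw [h]
      · exact le_trans (ihn (by omega) a ha (by omega))
          (le_of_lt (hmono n (by omega) (by omega)))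
  have schain : ∀ a b, 1 ≤ a → a < b → b ≤ m → θ a < θ b := by
    intro a b ha hab hbm
    have h1 : θ a ≤ θ (b - 1) := chain (b - 1) (by omega) a ha (by omega)
    have h2 : θ (b - 1) < θ b := by
      have := hmono (b - 1) (by omega) (by omega)
      simpa [Nat.sub_add_cancel (by omega : 1 ≤ b)] using this
    omega
  by_cases hdist : ∀ i ≤ m, ∀ j ≤ m, i ≠ j → v i ≠ v j
  · refine ⟨m, v, θ, le_refl _, hs, ht, hdist, hmono, hedge, fun _ => le_refl _, ?_⟩
    intro inst
    have hinj : Function.Injective (fun k : Fin (m + 1) => v k) := by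
      intro a b hab
      by_contra hne
      exact hdist a (by omega) b (by omega) (by
        intro h; exact hne (Fin.ext h)) hab
    have := Fintype.card_le_of_injective _ hinj
    simpa [Fintype.card_fin] using Nat.lt_of_succ_le (by simpa using this)
  · push_neg at hdist
    obtain ⟨i, hi, j, hj, hij, heq⟩ := hdist
    -- WLOG i < j
    wlog hlt : i < j generalizing i j
    · exact this j hj i hi hij.symm heq.symm (by omega)
    set d := j - i with hd
    have hd1 : 1 ≤ d := by omega
    set m2 := m - d with hm2
    have hm2i : i ≤ m2 := by omega
    set v2 : ℕ → V := fun k => if k ≤ i then v k else v (k + d) with hv2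
    set θ2 : ℕ → ℕ := fun k => if k ≤ i then θ k else θ (k + d) with hθ2
    have hs2 : v2 0 = s := by simp [hv2, hs]
    have ht2 : v2 m2 = t := by
      by_cases h : m2 ≤ i
      · have hji : m2 = i := by omega
        have hjm : j = m := by omega
        have e : v2 m2 = v i := by simp [hv2, hji]
        rw [e, heq, hjm, ht]
      · simp only [hv2, if_neg h]
        have : m2 + d = m := by omega
        rw [this, ht]
    have hmono2 : ∀ k, 1 ≤ k → k < m2 → θ2 k < θ2 (k + 1) := by
      intro k hk hkm
      by_cases h1 : k + 1 ≤ i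
      · simp only [hθ2, if_pos h1, if_pos (by omega : k ≤ i)]
        exact hmono k hk (by omega)
      · by_cases h2 : k ≤ i
        · have hki : k = i := by omega
          simp only [hθ2, if_pos h2, if_neg h1]
          have : k + 1 + d = j + 1 := by omega
          rw [this, hki]
          exact schain i (j + 1) (by omega) (by omega) (by omega)
        · simp only [hθ2, if_neg h1, if_neg h2]
          have : k + 1 + d = k + d + 1 := by omega
          rw [this]
          exact hmono (k + d) (by omega) (by omega)
    have hedge2 : ∀ k, 1 ≤ k → k ≤ m2 → E (v2 (k - 1)) (v2 k) (θ2 k) := by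
      intro k hk hkm
      by_cases h2 : k ≤ i
      · simp only [hv2, hθ2, if_pos h2, if_pos (by omega : k - 1 ≤ i)]
        exact hedge k hk (by omega)
      · by_cases h1 : k - 1 ≤ i
        · have hki : k = i + 1 := by omega
          simp only [hv2, hθ2, if_pos h1, if_neg h2]
          have e1 : k - 1 = i := by omega
          have e2 : k + d = j + 1 := by omega
          rw [e1, e2, heq]
          have := hedge (j + 1) (by omega) (by omega)
          simpa using this
        · simp only [hv2, hθ2, if_neg h1, if_neg h2]
          have e1 : k - 1 + d = k + d - 1 := by omega
          rw [e1]
          exact hedge (k + d) (by omega) (by omega)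
    obtain ⟨m', v', θ', h1, h2, h3, h4, h5, h6, h7, h8⟩ :=
      ih m2 (by omega) v2 θ2 hs2 ht2 hmono2 hedge2
    refine ⟨m', v', θ', by omega, h2, h3, h4, h5, h6, ?_, h8⟩
    intro hm'
    refine le_trans (h7 hm') ?_
    by_cases h : m2 ≤ i
    · simp only [hθ2, if_pos h]
      rcases Nat.eq_or_lt_of_le (show m2 ≤ m by omega) with he | hl
      · rw [he]
      · exact le_of_lt (schain m2 m (by omega) hl (le_refl _))
    · simp only [hθ2, if_neg h]
      have : m2 + d = m := by omega
      rw [this]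

/-- If there is a temporal walk with waiting from `s` to `t` (vertices `v 0 = s, …, v m = t`
and strictly increasing times `θ 1 < ⋯ < θ m` with `E (v (j-1)) (v j) (θ j)`), then there is
one with pairwise distinct vertices, of length at most `m`, whose arrival time is at most
`θ m`; in particular, whenever `V` is finite its length is less than the cardinality of `V`. -/
theorem stmt_9 {V : Type*} (E : V → V → ℕ → Prop) (s t : V)
    (m : ℕ) (v : ℕ → V) (θ : ℕ → ℕ)
    (hs : v 0 = s) (ht : v m = t)
    (hmono : ∀ j, 1 ≤ j → j < m → θ j < θ (j + 1))
    (hedge : ∀ j, 1 ≤ j → j ≤ m → E (v (j - 1)) (v j) (θ j)) :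
    ∃ (m' : ℕ) (v' : ℕ → V) (θ' : ℕ → ℕ),
      m' ≤ m ∧ v' 0 = s ∧ v' m' = t ∧
      (∀ i ≤ m', ∀ j ≤ m', i ≠ j → v' i ≠ v' j) ∧
      (∀ j, 1 ≤ j → j < m' → θ' j < θ' (j + 1)) ∧
      (∀ j, 1 ≤ j → j ≤ m' → E (v' (j - 1)) (v' j) (θ' j)) ∧
      (1 ≤ m' → θ' m' ≤ θ m) ∧
      (∀ (inst : Fintype V), m' < @Fintype.card V inst) := by
  exact stmt9_aux E s t m v θ hs ht hmono hedge
end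

section
/- Let V be a finite vertex set of cardinality N, let E : V → V → ℕ → Prop be an availability relation, let s ∈ V, and let F₁, …, F_k be nonempty subsets of V. If there exists a temporal walk with waiting starting at s that visits at least one vertex of each set F₁, …, F_k, then there exists such a temporal walk of length at most N·k. -/
/-- Times along a temporal walk are strictly increasing. -/
private lemma theta_strict_mono (θ : ℕ → ℕ) (m : ℕ)
    (hθ : ∀ j, 1 ≤ j → j < m → θ j < θ (j + 1)) :
    ∀ i j, 1 ≤ i → i < j → j ≤ m → θ i < θ j := by
  intro i j hi hij hjm
  induction j with
  | zero => omega
  | succ n ihn =>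
    rcases Nat.lt_or_ge i n with h | h
    · exact lt_trans (ihn h (by omega)) (hθ n (by omega) (by omega))
    · have hin : i = n := by omega
      subst hin
      exact hθ i hi (by omega)

/-- Cutting out the segment `(a, b]` from a temporal walk when `v a = v b` and no
needed visit occurs strictly inside `(a, b]`. -/
private lemma shorten {V : Type*} (E : V → V → ℕ → Prop) {k : ℕ} (F : Fin k → Set V)
    (m a b : ℕ) (v : ℕ → V) (θ : ℕ → ℕ)
    (hab : a < b) (hbm : b ≤ m) (hvab : v a = v b)
    (hθ : ∀ j, 1 ≤ j → j < m → θ j < θ (j + 1))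
    (hE : ∀ j, 1 ≤ j → j ≤ m → E (v (j - 1)) (v j) (θ j))
    (hvis : ∀ r, ∃ j, (j ≤ a ∨ (b < j ∧ j ≤ m)) ∧ v j ∈ F r) :
    ∃ (v' : ℕ → V) (θ' : ℕ → ℕ),
      v' 0 = v 0 ∧
      (∀ j, 1 ≤ j → j < m - (b - a) → θ' j < θ' (j + 1)) ∧
      (∀ j, 1 ≤ j → j ≤ m - (b - a) → E (v' (j - 1)) (v' j) (θ' j)) ∧
      (∀ r, ∃ j ≤ m - (b - a), v' j ∈ F r) := by
  classical
  set d := b - a with hd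
  refine ⟨fun j => if j ≤ a then v j else v (j + d),
          fun j => if j ≤ a then θ j else θ (j + d), ?_, ?_, ?_, ?_⟩
  · simp
  · intro j hj hjm'
    by_cases h1 : j + 1 ≤ a
    · simp only [show j ≤ a by omega, h1, if_pos]
      exact hθ j hj (by omega)
    · by_cases h2 : j ≤ a
      · -- j = a, crossing step
        have hja : j = a := by omega
        simp only [h2, if_pos, h1, if_neg, if_false]
        rw [hja]
        have : a + 1 + d = b + 1 := by omega
        rw [this]
        exact theta_strict_mono θ m hθ a (b + 1) (by omega) (by omega) (by omega)
      · simp only [h2, h1, if_neg, if_false]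
        have : j + 1 + d = j + d + 1 := by omega
        rw [this]
        exact hθ (j + d) (by omega) (by omega)
  · intro j hj hjm'
    by_cases h2 : j ≤ a
    · have h1 : j - 1 ≤ a := by omega
      simp only [h2, h1, if_pos]
      exact hE j hj (by omega)
    · simp only [h2, if_neg, if_false]
      by_cases h1 : j - 1 ≤ a
      · -- j = a + 1
        have hja : j = a + 1 := by omega
        simp only [h1, if_pos]
        have e1 : j - 1 = a := by omega
        have e2 : v a = v (j + d - 1) := by
          rw [hvab]; congr 1; omega
        rw [e1, e2]
        exact hE (j + d) (by omega) (by omega)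
      · simp only [h1, if_neg, if_false]
        have e : j - 1 + d = j + d - 1 := by omega
        rw [e]
        exact hE (j + d) (by omega) (by omega)
  · intro r
    obtain ⟨j, hj, hvj⟩ := hvis r
    rcases hj with hja | ⟨hjb, hjm⟩
    · exact ⟨j, by omega, by simp only [hja, if_pos]; exact hvj⟩
    · refine ⟨j - d, by omega, ?_⟩
      have h2 : ¬ (j - d ≤ a) := by omega
      simp only [h2, if_neg, if_false]
      have : j - d + d = j := by omega
      rw [this]
      exact hvj

private lemma aux_walk {V : Type*} [Fintype V] (N : ℕ) (hN : N = Fintype.card V)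
    (E : V → V → ℕ → Prop) (k : ℕ) (F : Fin k → Set V) :
    ∀ (m : ℕ) (v : ℕ → V) (θ : ℕ → ℕ),
      (∀ j, 1 ≤ j → j < m → θ j < θ (j + 1)) →
      (∀ j, 1 ≤ j → j ≤ m → E (v (j - 1)) (v j) (θ j)) →
      (∀ r, ∃ j ≤ m, v j ∈ F r) →
      ∃ (m' : ℕ) (v' : ℕ → V) (θ' : ℕ → ℕ),
        m' ≤ N * k ∧ v' 0 = v 0 ∧
        (∀ j, 1 ≤ j → j < m' → θ' j < θ' (j + 1)) ∧
        (∀ j, 1 ≤ j → j ≤ m' → E (v' (j - 1)) (v' j) (θ' j)) ∧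
        (∀ r, ∃ j ≤ m', v' j ∈ F r) := by
  classical
  intro m
  induction m using Nat.strong_induction_on with
  | _ m ih =>
    intro v θ hθ hE hvis
    by_cases hm : m ≤ N * k
    · exact ⟨m, v, θ, hm, rfl, hθ, hE, hvis⟩
    push_neg at hm
    have hm1 : 1 ≤ m := by omega
    -- key step: cut between two equivalent indices, then recurse
    have key : ∀ a b : ℕ, a < b → b ≤ m → v a = v b →
        (∀ r, ∃ j, (j ≤ a ∨ (b < j ∧ j ≤ m)) ∧ v j ∈ F r) →
        ∃ (m' : ℕ) (v' : ℕ → V) (θ' : ℕ → ℕ),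
          m' ≤ N * k ∧ v' 0 = v 0 ∧
          (∀ j, 1 ≤ j → j < m' → θ' j < θ' (j + 1)) ∧
          (∀ j, 1 ≤ j → j ≤ m' → E (v' (j - 1)) (v' j) (θ' j)) ∧
          (∀ r, ∃ j ≤ m', v' j ∈ F r) := by
      intro a b hab hbm hvab hvis'
      obtain ⟨v', θ', h0, h1, h2, h3⟩ := shorten E F m a b v θ hab hbm hvab hθ hE hvis'
      obtain ⟨m'', v'', θ'', hle, h0', h1', h2', h3'⟩ :=
        ih (m - (b - a)) (Nat.sub_lt (by omega) (by omega)) v' θ' h1 h2 h3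
      exact ⟨m'', v'', θ'', hle, by rw [h0', h0], h1', h2', h3'⟩
    by_cases htrunc : ∀ r, ∃ j ≤ m - 1, v j ∈ F r
    · -- the last step is useless: truncate
      exact ih (m - 1) (by omega) v θ
        (fun j hj hjm => hθ j hj (by omega))
        (fun j hj hjm => hE j hj (by omega)) htrunc
    -- some target is only reached at the very last step
    push_neg at htrunc
    obtain ⟨r0, hr0⟩ := htrunc
    have hP : ∀ r, ∃ j, j ≤ m ∧ v j ∈ F r := by
      intro r; obtain ⟨j, hj, hv⟩ := hvis r; exact ⟨j, hj, hv⟩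
    set jr : Fin k → ℕ := fun r => Nat.find (hP r) with hjr
    have hjr_le : ∀ r, jr r ≤ m := fun r => (Nat.find_spec (hP r)).1
    have hjr_mem : ∀ r, v (jr r) ∈ F r := fun r => (Nat.find_spec (hP r)).2
    have hjr0 : jr r0 = m := by
      by_contra h
      have h1 : jr r0 ≤ m - 1 := by have := hjr_le r0; omega
      exact hr0 (jr r0) h1 (hjr_mem r0)
    set c : ℕ → ℕ := fun j => (Finset.univ.filter (fun r => jr r ≤ j)).card with hc
    have hck : ∀ j, j < m → c j < k := by
      intro j hj
      have hss : Finset.univ.filter (fun r => jr r ≤ j) ⊂ Finset.univ := by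
        refine Finset.ssubset_iff_of_subset (Finset.filter_subset _ _) |>.2 ?_
        refine ⟨r0, Finset.mem_univ _, ?_⟩
        simp only [Finset.mem_filter]
        rintro ⟨-, hle⟩
        omega
      have := Finset.card_lt_card hss
      simpa using this
    -- pigeonhole
    set f : Fin m → V × Fin k := fun j => (v j, ⟨c j, hck j j.isLt⟩) with hf
    have hcard : Fintype.card (V × Fin k) < Fintype.card (Fin m) := by
      simp only [Fintype.card_prod, Fintype.card_fin, ← hN]
      omega
    obtain ⟨x, y, hxy, hfxy⟩ := Fintype.exists_ne_map_eq_of_card_lt f hcard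
    have hmain : ∀ x y : Fin m, (x : ℕ) < (y : ℕ) → f x = f y →
        ∃ (m' : ℕ) (v' : ℕ → V) (θ' : ℕ → ℕ),
          m' ≤ N * k ∧ v' 0 = v 0 ∧
          (∀ j, 1 ≤ j → j < m' → θ' j < θ' (j + 1)) ∧
          (∀ j, 1 ≤ j → j ≤ m' → E (v' (j - 1)) (v' j) (θ' j)) ∧
          (∀ r, ∃ j ≤ m', v' j ∈ F r) := by
      intro x y hlt hfeq
      have hv : v x = v y := congrArg Prod.fst hfeq
      have hcxy : c x = c y := by
        have := congrArg Prod.snd hfeq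
        simpa [hf] using congrArg Fin.val this
      -- equal counts of monotone filters give equal filters
      have hsub : Finset.univ.filter (fun r => jr r ≤ (x : ℕ)) ⊆
          Finset.univ.filter (fun r => jr r ≤ (y : ℕ)) := by
        intro r hr
        simp only [Finset.mem_filter] at hr ⊢
        exact ⟨hr.1, by omega⟩
      have hfeqset : Finset.univ.filter (fun r => jr r ≤ (x : ℕ)) =
          Finset.univ.filter (fun r => jr r ≤ (y : ℕ)) :=
        Finset.eq_of_subset_of_card_le hsub (le_of_eq hcxy.symm)
      apply key x y hlt (by omega) hv
      intro r
      refine ⟨jr r, ?_, hjr_mem r⟩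
      rcases le_or_gt (jr r) (y : ℕ) with h | h
      · left
        have : r ∈ Finset.univ.filter (fun r => jr r ≤ (x : ℕ)) := by
          rw [hfeqset]
          simp only [Finset.mem_filter]
          exact ⟨Finset.mem_univ _, h⟩
        simpa using this
      · right
        exact ⟨h, hjr_le r⟩
    rcases Ne.lt_or_gt hxy with h | h
    · exact hmain x y (by exact_mod_cast h) hfxy
    · exact hmain y x (by exact_mod_cast h) hfxy.symm

/-- If a temporal walk with waiting starting at `s` visits at least one vertex of each of
the nonempty target sets `F 0, …, F (k-1)`, then there is such a walk of length at most
`N * k` where `N` is the number of vertices. -/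
theorem stmt_10 {V : Type*} [Fintype V] (N : ℕ) (hN : N = Fintype.card V)
    (E : V → V → ℕ → Prop) (s : V) (k : ℕ) (F : Fin k → Set V)
    (hF : ∀ r, (F r).Nonempty)
    (hwalk : ∃ (m : ℕ) (v : ℕ → V) (θ : ℕ → ℕ),
      v 0 = s ∧
      (∀ j, 1 ≤ j → j < m → θ j < θ (j + 1)) ∧
      (∀ j, 1 ≤ j → j ≤ m → E (v (j - 1)) (v j) (θ j)) ∧
      (∀ r, ∃ j ≤ m, v j ∈ F r)) :
    ∃ (m : ℕ) (v : ℕ → V) (θ : ℕ → ℕ),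
      m ≤ N * k ∧
      v 0 = s ∧
      (∀ j, 1 ≤ j → j < m → θ j < θ (j + 1)) ∧
      (∀ j, 1 ≤ j → j ≤ m → E (v (j - 1)) (v j) (θ j)) ∧
      (∀ r, ∃ j ≤ m, v j ∈ F r) := by
  obtain ⟨m, v, θ, hv0, hθ, hE, hvis⟩ := hwalk
  obtain ⟨m', v', θ', hle, h0, h1, h2, h3⟩ := aux_walk N hN E k F m v θ hθ hE hvis
  exact ⟨m', v', θ', hle, by rw [h0, hv0], h1, h2, h3⟩
end

section
/- Let V be a finite vertex set and E : V → V → ℕ → Prop an availability relation such that there exist b ∈ ℕ and p > 0 with: for all u, v ∈ V and all θ ≥ b, E u v θ holds if and only if E u v (θ + p) holds. Define the step relation R on V × ℕ by R (u, θ) (v, θ') iff θ' = θ + 1 and E u v θ, and the step relation R' on V × {0, …, b + p − 1} by R' (u, i) (v, j) iff E u v i and (either j = i + 1 ≤ b + p − 1, or i = b + p − 1 and j = b). Let s ∈ V and let F₁, …, F_k ⊆ V. Then there is a finite R-path starting at (s, 0) whose sequence of visited V-components contains, for each 1 ≤ r ≤ k, at least one vertex of F_r, if and only if there is a finite R'-path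 starting at (s, 0) whose sequence of visited V-components contains, for each 1 ≤ r ≤ k, at least one vertex of F_r. -/
/-- Projection of a time `θ` into the finite window `{0, …, b + p − 1}`. -/
def auxPi (b p θ : ℕ) : ℕ := if θ < b + p then θ else b + (θ - b) % p

/-- One-player core of the product construction for generalized reachability on
ultimately periodic temporal graphs: there is a finite `R`-path from `(s, 0)` visiting
a vertex of every target set `F r` iff there is a finite `R'`-path from `(s, 0)` in the
finite product graph visiting a vertex of every `F r`. -/
theorem stmt_12 {V : Type*} [Fintype V] (E : V → V → ℕ → Prop)
    (b p : ℕ) (hp : 0 < p)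
    (hper : ∀ u v θ, b ≤ θ → (E u v θ ↔ E u v (θ + p)))
    (R R' : V × ℕ → V × ℕ → Prop)
    (hR : ∀ x y, R x y ↔ y.2 = x.2 + 1 ∧ E x.1 y.1 x.2)
    (hR' : ∀ x y, R' x y ↔ E x.1 y.1 x.2 ∧
      ((y.2 = x.2 + 1 ∧ x.2 + 1 ≤ b + p - 1) ∨ (x.2 = b + p - 1 ∧ y.2 = b)))
    (s : V) (k : ℕ) (F : Fin k → Set V) :
    (∃ (L : ℕ) (f : ℕ → V × ℕ), f 0 = (s, 0) ∧
      (∀ j < L, R (f j) (f (j + 1))) ∧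
      (∀ r, ∃ j ≤ L, (f j).1 ∈ F r)) ↔
    (∃ (L : ℕ) (f : ℕ → V × ℕ), f 0 = (s, 0) ∧
      (∀ j < L, R' (f j) (f (j + 1))) ∧
      (∀ r, ∃ j ≤ L, (f j).1 ∈ F r)) := by
  -- key periodicity lemma
  have key : ∀ m u v, E u v (b + m) ↔ E u v (b + m % p) := by
    intro m
    induction m using Nat.strong_induction_on with
    | _ m ih =>
      intro u v
      by_cases h : m < p
      · rw [Nat.mod_eq_of_lt h]
      · push_neg at h
        have heq : b + m = (b + (m - p)) + p := by omega
        have heq2 : m % p = (m - p) % p := Nat.mod_eq_sub_mod h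
        rw [heq, heq2, ← hper u v (b + (m - p)) (Nat.le_add_right _ _)]
        exact ih (m - p) (by omega) u v
  have keyθ : ∀ θ u v, E u v θ ↔ E u v (auxPi b p θ) := by
    intro θ u v
    unfold auxPi
    split_ifs with h
    · rfl
    · have hθ : θ = b + (θ - b) := by omega
      conv_lhs => rw [hθ]
      exact key (θ - b) u v
  have pi_zero : auxPi b p 0 = 0 := by unfold auxPi; rw [if_pos (by omega)]
  have pi_succ : ∀ θ, (auxPi b p θ = b + p - 1 ∧ auxPi b p (θ + 1) = b) ∨
      (auxPi b p (θ + 1) = auxPi b p θ + 1 ∧ auxPi b p θ + 1 ≤ b + p - 1) := by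
    intro θ
    unfold auxPi
    by_cases h1 : θ + 1 < b + p
    · right; rw [if_pos h1, if_pos (show θ < b + p by omega)]; omega
    · by_cases h2 : θ + 1 = b + p
      · left
        rw [if_neg (show ¬ θ + 1 < b + p by omega), if_pos (show θ < b + p by omega)]
        have h3 : θ + 1 - b = p := by omega
        rw [h3, Nat.mod_self]
        omega
      · have hθ : ¬ θ < b + p := by omega
        rw [if_neg (show ¬ θ + 1 < b + p by omega), if_neg hθ]
        have hab : θ + 1 - b = (θ - b) + 1 := by omega
        rw [hab]
        set a := θ - b with ha
        have hr : a % p < p := Nat.mod_lt _ hp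
        have hd := Nat.div_add_mod a p
        by_cases hc : a % p + 1 = p
        · left
          have hsplit : a + 1 = p * (a / p) + p := by omega
          have : (a + 1) % p = 0 := by
            rw [hsplit, Nat.mul_add_mod, Nat.mod_self]
          omega
        · right
          have hsplit : a + 1 = p * (a / p) + (a % p + 1) := by omega
          have : (a + 1) % p = a % p + 1 := by
            rw [hsplit, Nat.mul_add_mod, Nat.mod_eq_of_lt (by omega)]
          omega
  constructor
  · rintro ⟨L, f, h0, hstep, hvisit⟩
    have htime : ∀ j, j ≤ L → (f j).2 = j := by
      intro j
      induction j with
      | zero => intro _; rw [h0]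
      | succ n ih =>
        intro hle
        have h := (hR _ _).mp (hstep n (by omega))
        rw [h.1, ih (by omega)]
    refine ⟨L, fun j => ((f j).1, auxPi b p j), by simp [h0, pi_zero], ?_, ?_⟩
    · intro j hj
      rw [hR']
      have h := (hR _ _).mp (hstep j hj)
      have hE : E (f j).1 (f (j + 1)).1 j := by
        have h2 := h.2
        rw [htime j (le_of_lt hj)] at h2
        exact h2
      refine ⟨(keyθ j _ _).mp hE, ?_⟩
      rcases pi_succ j with ⟨h1, h2⟩ | ⟨h1, h2⟩
      · right; exact ⟨h1, h2⟩
      · left; exact ⟨h1, h2⟩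
    · intro r
      obtain ⟨j, hj, hmem⟩ := hvisit r
      exact ⟨j, hj, hmem⟩
  · rintro ⟨L, f, h0, hstep, hvisit⟩
    have htime : ∀ j, j ≤ L → (f j).2 = auxPi b p j := by
      intro j
      induction j with
      | zero => intro _; rw [h0, pi_zero]
      | succ n ih =>
        intro hle
        have h := (hR' _ _).mp (hstep n (by omega))
        have ihn := ih (by omega)
        rcases h.2 with ⟨e1, e2⟩ | ⟨e1, e2⟩ <;>
          rcases pi_succ n with ⟨h1, h2⟩ | ⟨h1, h2⟩ <;> omega
    refine ⟨L, fun j => ((f j).1, j), by simp [h0], ?_, ?_⟩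
    · intro j hj
      rw [hR]
      refine ⟨rfl, ?_⟩
      have h := (hR' _ _).mp (hstep j hj)
      have hE := h.1
      rw [htime j (le_of_lt hj)] at hE
      exact (keyθ j _ _).mpr hE
    · intro r
      obtain ⟨j, hj, hmem⟩ := hvisit r
      exact ⟨j, hj, hmem⟩
end
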